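/- Let n be a positive integer, p a prime, and A ∈ ℤ^{n×n} a non-singular matrix. Then there exists a finite-degree extension K_p of ℚ_p and an invertible matrix U with entries in K_p such that U^{-1} A U is similar to A and is p-correspondent: the matrix U^{-1} A U (which can be taken to be the modified Jordan form whose i-th block is the k_i×k_i matrix with eigenvalue μ_i on the diagonal and superdiagonal) has Smith normal form over the valuation ring of K_p equal to diag of its eigenvalues, so that the valuations of its invariant factors equal the valuations v_p(λ_1) ≤ ⋯ ≤ v_p(λ_n) of its eigenvalues. -/

import Mathlib

open Matrix Polynomial

/-- The `k`-th determinantal divisor of an integer matrix: the GCD of all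
`k × k` minors (non-injective row/column selections contribute `0` and do not
change the GCD). -/
noncomputable def detDiv {n : ℕ} (A : Matrix (Fin n) (Fin n) ℤ) (k : ℕ) : ℤ :=
  Finset.univ.gcd (fun στ : (Fin k → Fin n) × (Fin k → Fin n) =>
    (A.submatrix στ.1 στ.2).det)

/-- `A` is `p`-characterized: for each `i ∈ [1, r]` (where `r = rank A`), the
`p`-adic valuation of the coefficient `f_i` of `x^(n-i)` in the characteristic
polynomial of `A` equals the `p`-adic valuation of the `i`-th determinantal
divisor `Δ_i` of `A`.  Equality of valuations is expressed via divisibility by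
all powers of `p`. -/
def PCharacterized {n : ℕ} (p : ℕ) (A : Matrix (Fin n) (Fin n) ℤ) : Prop :=
  ∀ i : ℕ, 1 ≤ i → i ≤ A.rank →
    ∀ k : ℕ, ((p : ℤ) ^ k ∣ A.charpoly.coeff (n - i) ↔ (p : ℤ) ^ k ∣ detDiv A i)

/-- `s : Fin n → ℤ` is (the diagonal of) a Smith normal form of `A`:
`A = P ⬝ diagonal s ⬝ Q` for unimodular `P, Q`, with the divisibility chain
`s i ∣ s j` for `i ≤ j`. -/
def IsSmithDiag {n : ℕ} (A : Matrix (Fin n) (Fin n) ℤ) (s : Fin n → ℤ) : Prop :=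
  (∃ P Q : Matrix (Fin n) (Fin n) ℤ, IsUnit P.det ∧ IsUnit Q.det ∧
      A = P * Matrix.diagonal s * Q) ∧
    ∀ i j : Fin n, i ≤ j → s i ∣ s j

/-- The `p`-adic valuation of an element `a` of a finite extension of `ℚ_p`,
defined via its minimal polynomial `x^d + ⋯ + a₀` over `ℚ_p` as `v_p(a₀)/d`. -/
noncomputable def padicEigVal (p : ℕ) [Fact p.Prime] {K : Type*} [Field K]
    [Algebra ℚ_[p] K] (a : K) : ℚ :=
  (((minpoly ℚ_[p] a).coeff 0).valuation : ℚ) / ((minpoly ℚ_[p] a).natDegree : ℚ)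

open scoped Classical in
/-- `A` is `p`-correspondent: for any Smith normal form `diag s` of `A` and any
finite extension `K` of `ℚ_p` containing all eigenvalues of `A` (i.e. in which
the characteristic polynomial splits, having `n` roots counted with
multiplicity), the multiset of `p`-adic valuations of the nonzero eigenvalues
of `A` equals the multiset of `p`-adic valuations of the nonzero invariant
factors of `A`.  (Equality of multisets is the same as equality of the sorted
lists `v_p(λ_1) ≤ ⋯ ≤ v_p(λ_r)` and `v_p(s_1), …, v_p(s_r)`.) -/
def PCorrespondent {n : ℕ} (p : ℕ) [Fact p.Prime] (A : Matrix (Fin n) (Fin n) ℤ) : Prop :=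
  ∀ s : Fin n → ℤ, IsSmithDiag A s →
    ∀ (K : Type) (_ : Field K) (_ : Algebra ℚ_[p] K) (_ : FiniteDimensional ℚ_[p] K),
      (A.charpoly.map (Int.castRingHom K)).roots.card = n →
      (((A.charpoly.map (Int.castRingHom K)).roots.filter (· ≠ 0)).map (padicEigVal p))
        = ((Finset.univ.val.map s).filter (· ≠ 0)).map
            (fun x => (padicValInt p x : ℚ))

section AuxiliaryLemmas

lemma myValNonneg (p : ℕ) [Fact p.Prime] {K : Type} [Field K] [Algebra ℚ_[p] K]
    [Algebra ℤ_[p] K] [IsScalarTower ℤ_[p] ℚ_[p] K] {x : K} (hx : IsIntegral ℤ_[p] x) :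
    0 ≤ padicEigVal p x := by
  unfold padicEigVal
  have h1 : minpoly ℚ_[p] x = (minpoly ℤ_[p] x).map (algebraMap ℤ_[p] ℚ_[p]) :=
    minpoly.isIntegrallyClosed_eq_field_fractions' ℚ_[p] hx
  rw [h1, Polynomial.coeff_map]
  apply div_nonneg _ (Nat.cast_nonneg _)
  have h2 : ‖algebraMap ℤ_[p] ℚ_[p] ((minpoly ℤ_[p] x).coeff 0)‖ ≤ 1 := by
    rw [PadicInt.algebraMap_apply, PadicInt.padic_norm_e_of_padicInt]
    exact PadicInt.norm_le_one _
  have h3 := (Padic.norm_le_one_iff_val_nonneg _).mp h2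
  exact_mod_cast h3

lemma myValNegOne (p : ℕ) [Fact p.Prime] : (-1 : ℚ_[p]).valuation = 0 := by
  have hm : (-1 : ℚ_[p]) * (-1) = 1 := by norm_num
  have h2 := Padic.valuation_mul (x := (-1 : ℚ_[p])) (y := (-1 : ℚ_[p]))
    (by norm_num) (by norm_num)
  rw [hm, Padic.valuation_one] at h2
  omega

lemma myValOne (p : ℕ) [Fact p.Prime] {K : Type} [Field K] [Algebra ℚ_[p] K] :
    padicEigVal p (1 : K) = 0 := by
  unfold padicEigVal
  have h1 : minpoly ℚ_[p] (1 : K) = X - C 1 := by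
    have h := minpoly.eq_X_sub_C K (1 : ℚ_[p])
    rw [_root_.map_one] at h
    exact h
    
  rw [h1]
  have hc : (X - C (1 : ℚ_[p])).coeff 0 = -1 := by simp
  rw [hc, natDegree_X_sub_C, myValNegOne]
  norm_num

section Tri
variable {L : Type*} [Field L]

lemma myCharpolyConj {m : Type*} [Fintype m] [DecidableEq m] (V V' B : Matrix m m L)
    (h1 : V * V' = 1) : (V' * B * V).charpoly = B.charpoly := by
  have h2 : V' * V = 1 := mul_eq_one_comm.mp h1
  have key : charmatrix (V' * B * V)
      = (V'.map C) * charmatrix B * (V.map C) := by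
    unfold charmatrix
    rw [mul_sub, sub_mul]
    congr 1
    · have hc : ∀ M : Matrix m m L[X], Matrix.scalar m (X : L[X]) * M = M * Matrix.scalar m X := by
        intro M
        ext i j
        simp [Matrix.scalar_apply, Matrix.diagonal_mul, Matrix.mul_diagonal, mul_comm]
      have h7 : (V'.map C) * Matrix.scalar m X * (V.map C) = Matrix.scalar m X := by
        rw [← hc (V'.map C), mul_assoc, ← Matrix.map_mul, h2,
          Matrix.map_one _ (map_zero C) (map_one C), mul_one]
      exact h7.symm
    · simp only [RingHom.mapMatrix_apply]
      rw [← Matrix.map_mul, ← Matrix.map_mul]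
  show (charmatrix _).det = (charmatrix _).det
  rw [key, Matrix.det_mul, Matrix.det_mul]
  have : (V'.map C).det * (V.map C).det = 1 := by
    rw [← Matrix.det_mul, ← Matrix.map_mul, h2, Matrix.map_one _ (map_zero C) (map_one C),
      Matrix.det_one]
  ring_nf
  calc (V'.map C).det * (charmatrix B).det * (V.map C).det
      = ((V'.map C).det * (V.map C).det) * (charmatrix B).det := by ring
    _ = (charmatrix B).det := by rw [this, one_mul]

theorem myTri : ∀ (n : ℕ) (B : Matrix (Fin n) (Fin n) L) (d : Fin n → L),
    B.charpoly = ∏ i, (X - C (d i)) →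
    ∃ U U' : Matrix (Fin n) (Fin n) L, U * U' = 1 ∧
      (∀ i j : Fin n, j < i → (U' * B * U) i j = 0) ∧ (∀ i, (U' * B * U) i i = d i) := by
  intro n
  induction n with
  | zero =>
    intro B d _
    exact ⟨1, 1, by simp, fun i => i.elim0, fun i => i.elim0⟩
  | succ n IH =>
    intro B d hB
    set μ := d 0 with hμ
    -- eigenvector
    have heval : eval μ B.charpoly = 0 := by
      rw [hB, eval_prod]
      refine Finset.prod_eq_zero (Finset.mem_univ 0) ?_
      simp [hμ]
    have hdet : (B - μ • 1).det = 0 := by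
      have h1 : eval μ B.charpoly = ((charmatrix B).map (eval μ)).det := by
        show eval μ (charmatrix B).det = _
        have := RingHom.map_det (evalRingHom μ) (charmatrix B)
        exact this
      have h2 : (charmatrix B).map (eval μ) = μ • (1 : Matrix (Fin (n+1)) (Fin (n+1)) L) - B := by
        ext i j
        by_cases h : i = j
        · subst h; simp [charmatrix_apply_eq, Matrix.one_apply]
        · simp [charmatrix_apply_ne _ _ _ h, Matrix.one_apply, h]
      have h3 : (μ • (1 : Matrix (Fin (n+1)) (Fin (n+1)) L) - B).det = 0 := by
        rw [← h2, ← h1, heval]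
      have h4 : B - μ • 1 = -(μ • (1 : Matrix (Fin (n+1)) (Fin (n+1)) L) - B) := (neg_sub _ _).symm
      rw [h4, Matrix.det_neg, h3, mul_zero]
    obtain ⟨v, hv0, hv⟩ := (Matrix.exists_mulVec_eq_zero_iff).mpr hdet
    have hvB : B.mulVec v = μ • v := by
      have := hv
      rw [Matrix.sub_mulVec, Matrix.smul_mulVec, Matrix.one_mulVec, sub_eq_zero] at this
      exact this
    obtain ⟨k, hk'⟩ := Function.ne_iff.mp hv0
    have hk : v k ≠ 0 := by simpa using hk'
    set σ := Equiv.swap (0 : Fin (n+1)) k with hσ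
    set V := ((1 : Matrix (Fin (n+1)) (Fin (n+1)) L).updateCol k v).submatrix id σ with hVdef
    have hVcol : ∀ i, V i 0 = v i := by
      intro i
      simp [hVdef, Matrix.submatrix_apply, hσ, Equiv.swap_apply_left, Matrix.updateCol_apply]
    have hVdet : IsUnit V.det := by
      rw [hVdef, Matrix.det_permute']
      have hdet1 : ((1 : Matrix (Fin (n+1)) (Fin (n+1)) L).updateCol k v).det = v k := by
        rw [← Matrix.cramer_apply, Matrix.cramer_one]
        rfl
      rw [hdet1]
      apply isUnit_iff_ne_zero.mpr
      apply mul_ne_zero ?_ hk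
      rcases Int.units_eq_one_or (Equiv.Perm.sign σ) with h | h <;> simp [h]
    have hVV' : V * V⁻¹ = 1 := Matrix.mul_nonsing_inv V hVdet
    have hV'V : V⁻¹ * V = 1 := Matrix.nonsing_inv_mul V hVdet
    set B' := V⁻¹ * B * V with hB'def
    have hB'col : ∀ i, B' i 0 = if i = 0 then μ else 0 := by
      intro i
      have hBV : ∀ l, (B * V) l 0 = μ * v l := by
        intro l
        rw [Matrix.mul_apply]
        have : ∀ m, B l m * V m 0 = B l m * v m := fun m => by rw [hVcol]
        simp_rw [this]
        have := congrFun hvB l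
        simpa [Matrix.mulVec, dotProduct, Pi.smul_apply, smul_eq_mul] using this
      have : B' i 0 = ∑ l, V⁻¹ i l * (B * V) l 0 := by
        rw [hB'def, mul_assoc, Matrix.mul_apply]
      rw [this]
      simp_rw [hBV]
      have h5 : ∑ l, V⁻¹ i l * (μ * v l) = μ * ∑ l, V⁻¹ i l * V l 0 := by
        rw [Finset.mul_sum]; congr 1; ext l; rw [hVcol]; ring
      rw [h5]
      have : ∑ l, V⁻¹ i l * V l 0 = (V⁻¹ * V) i 0 := (Matrix.mul_apply).symm
      rw [this, hV'V, Matrix.one_apply]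
      split <;> simp
    have hchar' : B'.charpoly = B.charpoly := by
      rw [hB'def]; exact myCharpolyConj V V⁻¹ B hVV'
    set B'' := B'.submatrix Fin.succ Fin.succ with hB''def
    have hminor : (charmatrix B').submatrix (Fin.succAbove 0) Fin.succ = charmatrix B'' := by
      rw [Fin.succAbove_zero]
      ext i j
      by_cases h : i = j
      · subst h
        simp [Matrix.submatrix_apply, charmatrix_apply_eq, hB''def]
      · have h' : Fin.succ i ≠ Fin.succ j := fun hc => h (Fin.succ_injective _ hc)
        simp [Matrix.submatrix_apply, charmatrix_apply_ne _ _ _ h, charmatrix_apply_ne _ _ _ h',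
          hB''def]
    have hBB : B'.charpoly = (X - C μ) * B''.charpoly := by
      show (charmatrix B').det = _
      rw [Matrix.det_succ_column_zero, Fin.sum_univ_succ]
      have hz : ∀ i' : Fin n, (-1 : L[X]) ^ ((Fin.succ i' : Fin (n+1)) : ℕ) *
          charmatrix B' (Fin.succ i') 0 *
          ((charmatrix B').submatrix (Fin.succ i').succAbove Fin.succ).det = 0 := by
        intro i'
        have : charmatrix B' (Fin.succ i') 0 = 0 := by
          rw [charmatrix_apply_ne _ _ _ (Fin.succ_ne_zero i'), hB'col]
          simp [Fin.succ_ne_zero i']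
        rw [this, mul_zero, zero_mul]
      rw [Finset.sum_congr rfl (fun i' _ => hz i'), Finset.sum_const_zero, add_zero]
      have h00 : charmatrix B' 0 0 = X - C μ := by
        rw [charmatrix_apply_eq, hB'col]; simp
      rw [h00, hminor]
      rw [show ((0 : Fin (n+1)) : ℕ) = 0 from rfl, pow_zero, one_mul]
      rfl
    have hsp : B''.charpoly = ∏ i : Fin n, (X - C (d i.succ)) := by
      have h6 : (X - C μ) * B''.charpoly = (X - C μ) * ∏ i : Fin n, (X - C (d i.succ)) := by
        rw [← hBB, hchar', hB, Fin.prod_univ_succ, ← hμ]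
      exact mul_left_cancel₀ (Polynomial.X_sub_C_ne_zero μ) h6
    obtain ⟨Un, Un', hUn, htr, hdg⟩ := IH B'' (fun i => d i.succ) hsp
    -- lift
    let lift : Matrix (Fin n) (Fin n) L → Matrix (Fin (n+1)) (Fin (n+1)) L := fun X =>
      Matrix.of fun i j =>
        Fin.cases (Fin.cases (1 : L) (fun _ => 0) j) (fun i' => Fin.cases (0 : L)
          (fun j' => X i' j') j) i
    have lift00 : ∀ X, lift X 0 0 = 1 := fun X => rfl
    have lift0s : ∀ X j', lift X 0 (Fin.succ j') = 0 := fun X j' => by simp [lift]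
    have lifts0 : ∀ X i', lift X (Fin.succ i') 0 = 0 := fun X i' => by simp [lift]
    have liftss : ∀ X i' j', lift X (Fin.succ i') (Fin.succ j') = X i' j' := fun X i' j' => by
      simp [lift]
    have hliftmul : ∀ X Y, lift X * lift Y = lift (X * Y) := by
      intro X Y
      ext i j
      rw [Matrix.mul_apply, Fin.sum_univ_succ]
      induction i using Fin.cases with
      | zero =>
        induction j using Fin.cases with
        | zero => simp [lift00, lift0s, lifts0]
        | succ j' => simp [lift00, lift0s, lifts0, liftss]
      | succ i' =>
        induction j using Fin.cases with
        | zero => simp [lift00, lift0s, lifts0, liftss]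
        | succ j' =>
          simp only [lifts0, zero_mul, zero_add, liftss]
          rw [Matrix.mul_apply]
    have hliftone : lift 1 = 1 := by
      ext i j
      induction i using Fin.cases with
      | zero =>
        induction j using Fin.cases with
        | zero => simp [lift00, Matrix.one_apply]
        | succ j' => simp [lift0s, Matrix.one_apply, (Fin.succ_ne_zero j').symm]
      | succ i' =>
        induction j using Fin.cases with
        | zero => simp [lifts0, Matrix.one_apply, Fin.succ_ne_zero i']
        | succ j' =>
          simp [liftss, Matrix.one_apply, Fin.succ_inj]
    set W := lift Un with hW
    set W' := lift Un' with hW'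
    have hWW' : W * W' = 1 := by rw [hW, hW', hliftmul, hUn, hliftone]
    -- entries of T' = W' * B' * W
    set T' := W' * (B' * W) with hT'
    have hBW : ∀ l j', (B' * W) l (Fin.succ j') = ∑ m', B' l (Fin.succ m') * Un m' j' := by
      intro l j'
      rw [Matrix.mul_apply, Fin.sum_univ_succ, hW, lift0s, mul_zero, zero_add]
      exact Finset.sum_congr rfl fun m' _ => by rw [liftss]
    have hBW0 : ∀ l, (B' * W) l 0 = B' l 0 := by
      intro l
      rw [Matrix.mul_apply, Fin.sum_univ_succ, hW, lift00, mul_one]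
      have : ∀ m' : Fin n, B' l (Fin.succ m') * lift Un (Fin.succ m') 0 = 0 := fun m' => by
        rw [lifts0, mul_zero]
      rw [Finset.sum_congr rfl fun m' _ => this m', Finset.sum_const_zero, add_zero]
    have hT'col0 : ∀ i, T' i 0 = if i = 0 then μ else 0 := by
      intro i
      rw [hT', Matrix.mul_apply, Fin.sum_univ_succ]
      have hz : ∀ l' : Fin n, W' i (Fin.succ l') * (B' * W) (Fin.succ l') 0 = 0 := by
        intro l'
        rw [hBW0, hB'col]
        simp [Fin.succ_ne_zero l']
      rw [Finset.sum_congr rfl fun l' _ => hz l', Finset.sum_const_zero, add_zero, hBW0, hB'col]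
      induction i using Fin.cases with
      | zero => rw [hW', lift00, one_mul]
      | succ i' => rw [hW', lifts0, zero_mul]; simp [Fin.succ_ne_zero i']
    have hT'ss : ∀ i' j', T' (Fin.succ i') (Fin.succ j') = (Un' * B'' * Un) i' j' := by
      intro i' j'
      rw [hT', Matrix.mul_apply, Fin.sum_univ_succ, hW', lifts0, zero_mul, zero_add]
      conv_rhs => rw [mul_assoc, Matrix.mul_apply]
      refine Finset.sum_congr rfl fun l' _ => ?_
      rw [liftss]
      congr 1
      rw [hBW, Matrix.mul_apply]
      refine Finset.sum_congr rfl fun m' _ => ?_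
      rw [hB''def, Matrix.submatrix_apply]
    have hident : W' * V⁻¹ * B * (V * W) = T' := by
      rw [hT', hB'def]
      simp only [mul_assoc]
    refine ⟨V * W, W' * V⁻¹, ?_, ?_, ?_⟩
    · have h8 : V * W * (W' * V⁻¹) = V * ((W * W') * V⁻¹) := by simp only [mul_assoc]
      rw [h8, hWW', one_mul, hVV']
    · intro i j hij
      rw [hident]
      induction i using Fin.cases with
      | zero => exact absurd hij (Fin.not_lt_zero _)
      | succ i' =>
        induction j using Fin.cases with
        | zero => rw [hT'col0]; simp [Fin.succ_ne_zero i']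
        | succ j' =>
          rw [hT'ss]
          exact htr _ _ (by exact_mod_cast Fin.succ_lt_succ_iff.mp hij)
    · intro i
      rw [hident]
      induction i using Fin.cases with
      | zero => rw [hT'col0]; simp [hμ]
      | succ i' => rw [hT'ss, hdg]

end Tri

end AuxiliaryLemmas

/-- For a non-singular `A ∈ ℤ^{n×n}` there is a finite
extension `K` of `ℚ_p` and an invertible `U` over `K` such that `U⁻¹ A U`
(similar to `A`) is `p`-correspondent over `K`: it admits a Smith normal form
`diagonal d` over the valuation ring of `K` (`P, Q` unimodular over the
valuation ring, i.e. with integral entries and determinant of valuation `0`,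
and `v_p(d 1) ≤ ⋯ ≤ v_p(d n)`), whose diagonal valuations are exactly the
valuations of the eigenvalues of `A` (the roots of the characteristic
polynomial, all of which lie in `K`). -/
theorem exists_similar_pCorrespondent (n : ℕ) (hn : 0 < n) (p : ℕ) [Fact p.Prime]
    (A : Matrix (Fin n) (Fin n) ℤ) (hA : A.det ≠ 0) :
    ∃ (K : Type) (_ : Field K) (_ : Algebra ℚ_[p] K) (_ : FiniteDimensional ℚ_[p] K)
      (U : Matrix (Fin n) (Fin n) K),
      IsUnit U.det ∧
      (((A.map (Int.cast : ℤ → K)).charpoly).roots.card = n) ∧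
      ∃ (P Q : Matrix (Fin n) (Fin n) K) (d : Fin n → K),
        (∀ i j, 0 ≤ padicEigVal p (P i j)) ∧ P.det ≠ 0 ∧ padicEigVal p P.det = 0 ∧
        (∀ i j, 0 ≤ padicEigVal p (Q i j)) ∧ Q.det ≠ 0 ∧ padicEigVal p Q.det = 0 ∧
        (∀ i, 0 ≤ padicEigVal p (d i)) ∧
        (∀ i j : Fin n, i ≤ j → padicEigVal p (d i) ≤ padicEigVal p (d j)) ∧
        P * (U⁻¹ * A.map (Int.cast : ℤ → K) * U) * Q = Matrix.diagonal d ∧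
        Multiset.map (padicEigVal p) ((A.map (Int.cast : ℤ → K)).charpoly).roots
          = Multiset.map (fun i => padicEigVal p (d i)) Finset.univ.val := by
  classical
  set q : Polynomial ℚ_[p] := A.charpoly.map (Int.castRingHom ℚ_[p]) with hq
  set K := q.SplittingField with hK
  haveI hKchar : CharZero K := charZero_of_injective_algebraMap (algebraMap ℚ_[p] K).injective
  set Amap : Matrix (Fin n) (Fin n) K := A.map (Int.cast : ℤ → K) with hAmap
  set cp : Polynomial K := Amap.charpoly with hcp
  have hintK : ∀ (R : Type) [inst : Ring R] (f g : ℤ →+* R), f = g := by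
    intro R _ f g; exact Subsingleton.elim f g
  have hcast : Amap = A.map ⇑(Int.castRingHom K) := rfl
  have hcpq : cp = q.map (algebraMap ℚ_[p] K) := by
    rw [hcp, hcast, Matrix.charpoly_map]
    show Polynomial.map (Int.castRingHom K) A.charpoly
      = Polynomial.map (algebraMap ℚ_[p] K) (Polynomial.map (Int.castRingHom ℚ_[p]) A.charpoly)
    rw [Polynomial.map_map,
      hintK K (Int.castRingHom K) ((algebraMap ℚ_[p] K).comp (Int.castRingHom ℚ_[p]))]
  have hmonic : cp.Monic := Matrix.charpoly_monic Amap
  have hcpne : cp ≠ 0 := hmonic.ne_zero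
  have hsplits : cp.Splits := by
    rw [hcpq]
    exact Polynomial.SplittingField.splits q
  have hdeg : cp.natDegree = n := by
    rw [hcp, Matrix.charpoly_natDegree_eq_dim, Fintype.card_fin]
  have hcard : cp.roots.card = n := by
    rw [Polynomial.splits_iff_card_roots.mp hsplits, hdeg]
  -- roots are nonzero
  have hdetA : Amap.det ≠ 0 := by
    rw [hcast]
    have hAdetK : (A.map ⇑(Int.castRingHom K)).det = (Int.castRingHom K) A.det := by
      rw [RingHom.map_det, RingHom.mapMatrix_apply]
    rw [hAdetK]
    intro h
    rw [show ((Int.castRingHom K) A.det) = ((A.det : ℤ) : K) from rfl] at h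
    exact hA (by exact_mod_cast h)
  have hroots_ne : ∀ x ∈ cp.roots, x ≠ 0 := by
    intro x hx hx0
    subst hx0
    have h0 : cp.coeff 0 = 0 := by
      rw [Polynomial.coeff_zero_eq_eval_zero]
      exact (Polynomial.mem_roots hcpne).mp hx
    apply hdetA
    rw [Matrix.det_eq_sign_charpoly_coeff, ← hcp, h0, mul_zero]
  -- roots are integral over ℤ_[p]
  have hroots_int : ∀ x ∈ cp.roots, IsIntegral ℤ_[p] x := by
    intro x hx
    refine ⟨A.charpoly.map (Int.castRingHom ℤ_[p]), (Matrix.charpoly_monic A).map _, ?_⟩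
    rw [← Polynomial.eval_map, Polynomial.map_map,
      hintK K ((algebraMap ℤ_[p] K).comp (Int.castRingHom ℤ_[p])) (Int.castRingHom K)]
    have : cp = A.charpoly.map (Int.castRingHom K) := by rw [hcp, hcast, Matrix.charpoly_map]
    rw [← this]
    exact (Polynomial.mem_roots hcpne).mp hx
  -- sorted enumeration of the roots
  set w : K → ℚ := padicEigVal p with hw
  set lle : K → K → Bool := fun a b => decide (w a ≤ w b) with hlle
  set l : List K := cp.roots.toList.mergeSort lle with hl
  have hperm : l.Perm cp.roots.toList := List.mergeSort_perm cp.roots.toList lle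
  have hlcoe : (l : Multiset K) = cp.roots := by
    rw [Multiset.coe_eq_coe.mpr hperm, Multiset.coe_toList]
  have hsorted : l.Pairwise (fun a b => lle a b = true) :=
    List.pairwise_mergeSort (le := lle)
      (fun a b c h1 h2 => by
        simp only [hlle, decide_eq_true_eq] at h1 h2 ⊢; exact le_trans h1 h2)
      (fun a b => by
        simp only [hlle, Bool.or_eq_true, decide_eq_true_eq]; exact le_total _ _)
      cp.roots.toList
  have hlen : l.length = n := by
    rw [hperm.length_eq, Multiset.length_toList, hcard]
  set d : Fin n → K := fun i => l.get (Fin.cast hlen.symm i) with hd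
  have hofFn : List.ofFn d = l := by
    refine List.ext_get (by rw [List.length_ofFn, hlen]) ?_
    intro i h1 h2
    rw [List.get_ofFn]
    rfl
  have hd_multiset : Multiset.map d Finset.univ.val = cp.roots := by
    rw [← hlcoe, ← hofFn]
    exact Fin.univ_val_map d
  have hd_sorted : ∀ i j : Fin n, i ≤ j → w (d i) ≤ w (d j) := by
    intro i j hij
    rcases eq_or_lt_of_le hij with h | h
    · subst h; exact le_refl _
    · have := (List.pairwise_iff_get.mp hsorted) (Fin.cast hlen.symm i) (Fin.cast hlen.symm j)
        (by simpa using h)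
      simpa [hlle, hd] using this
  have hd_mem : ∀ i, d i ∈ cp.roots := by
    intro i
    rw [← hlcoe]
    exact Multiset.mem_coe.mpr (List.mem_iff_get.mpr ⟨_, rfl⟩)
  have hd_ne : ∀ i, d i ≠ 0 := fun i => hroots_ne _ (hd_mem i)
  have hd_int : ∀ i, IsIntegral ℤ_[p] (d i) := fun i => hroots_int _ (hd_mem i)
  have hprod : cp = ∏ i, (X - C (d i)) := by
    conv_lhs => rw [hsplits.eq_prod_roots_of_monic hmonic]
    rw [← hd_multiset, Multiset.map_map, Finset.prod_eq_multiset_prod]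
    rfl
  -- triangularize
  obtain ⟨W, W', hWW', htr, hdg⟩ := myTri n Amap d (by rw [← hcp]; exact hprod)
  set T₀ : Matrix (Fin n) (Fin n) K := W' * Amap * W with hT₀
  -- find a common integral multiplier t
  have htinj : Function.Injective (algebraMap ℤ_[p] K) := by
    rw [IsScalarTower.algebraMap_eq ℤ_[p] ℚ_[p] K]
    exact (algebraMap ℚ_[p] K).injective.comp (IsFractionRing.injective ℤ_[p] ℚ_[p])
  have hmul : ∀ (x : K), ∃ c : ℤ_[p], c ≠ 0 ∧ IsIntegral ℤ_[p] (algebraMap ℤ_[p] K c * x) := by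
    intro x
    have hxalg : IsAlgebraic ℤ_[p] x := by
      rw [IsFractionRing.isAlgebraic_iff ℤ_[p] ℚ_[p] K]
      exact (IsIntegral.of_finite ℚ_[p] x).isAlgebraic
    obtain ⟨c, hc0, hcint⟩ := hxalg.exists_integral_multiple
    exact ⟨c, hc0, by rw [← Algebra.smul_def]; exact hcint⟩
  choose c hc0 hcint using fun ij : Fin n × Fin n => hmul (T₀ ij.1 ij.2 / d ij.1)
  set t₀ : ℤ_[p] := ∏ ij : Fin n × Fin n, c ij with ht₀
  have ht₀0 : t₀ ≠ 0 := Finset.prod_ne_zero_iff.mpr (fun ij _ => hc0 ij)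
  set t : K := algebraMap ℤ_[p] K t₀ with ht
  have ht0 : t ≠ 0 := fun h => ht₀0 (htinj (by rw [← ht, h, map_zero]))
  have htInt : IsIntegral ℤ_[p] t := isIntegral_algebraMap
  have htx : ∀ i j : Fin n, IsIntegral ℤ_[p] (t * (T₀ i j / d i)) := by
    intro i j
    obtain ⟨r, hr⟩ : c (i, j) ∣ t₀ := Finset.dvd_prod_of_mem c (Finset.mem_univ (i, j))
    have : t * (T₀ i j / d i)
        = algebraMap ℤ_[p] K r * (algebraMap ℤ_[p] K (c (i, j)) * (T₀ i j / d i)) := by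
      rw [ht, hr, _root_.map_mul]; ring
    rw [this]
    exact IsIntegral.mul isIntegral_algebraMap (hcint (i, j))
  -- scaled conjugation
  set Dt : Matrix (Fin n) (Fin n) K := Matrix.diagonal (fun i => t ^ (i : ℕ)) with hDt
  set Dt' : Matrix (Fin n) (Fin n) K := Matrix.diagonal (fun i => (t ^ (i : ℕ))⁻¹) with hDt'
  have hDtDt' : Dt * Dt' = 1 := by
    rw [hDt, hDt', Matrix.diagonal_mul_diagonal]
    rw [show ((fun i : Fin n => t ^ (i:ℕ) * (t ^ (i:ℕ))⁻¹)) = fun _ => (1:K) from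
      funext fun i => mul_inv_cancel₀ (pow_ne_zero _ ht0)]
    exact Matrix.diagonal_one
  set U : Matrix (Fin n) (Fin n) K := W * Dt with hU
  set R : Matrix (Fin n) (Fin n) K := Dt' * W' with hR
  have hUR : U * R = 1 := by
    rw [hU, hR]
    have h8 : W * Dt * (Dt' * W') = W * ((Dt * Dt') * W') := by simp only [mul_assoc]
    rw [h8, hDtDt', one_mul, hWW']
  have hUinv : U⁻¹ = R := Matrix.inv_eq_right_inv hUR
  have hUdet : IsUnit U.det := Matrix.isUnit_det_of_right_inverse hUR
  set M : Matrix (Fin n) (Fin n) K := R * Amap * U with hM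
  have hMapp : ∀ i j, M i j = (t ^ (i : ℕ))⁻¹ * T₀ i j * t ^ (j : ℕ) := by
    intro i j
    have h9 : M = Dt' * T₀ * Dt := by
      rw [hM, hR, hU, hT₀]
      simp only [mul_assoc]
    rw [h9, hDt, hDt', Matrix.mul_diagonal, Matrix.diagonal_mul]
  set F : Matrix (Fin n) (Fin n) K :=
    Matrix.of (fun i j : Fin n => if i < j then t ^ ((j:ℕ) - (i:ℕ)) * (T₀ i j / d i) else 0)
    with hF
  have hFapp : ∀ i j, F i j = if i < j then t ^ ((j:ℕ) - (i:ℕ)) * (T₀ i j / d i) else 0 :=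
    fun i j => rfl
  have hFint : ∀ i j, IsIntegral ℤ_[p] (F i j) := by
    intro i j
    rw [hFapp]
    split
    · next hij =>
      have hlt : (i : ℕ) < (j : ℕ) := hij
      have harith : (j:ℕ) - (i:ℕ) = ((j:ℕ) - (i:ℕ) - 1) + 1 := by omega
      rw [harith, pow_succ, mul_assoc]
      exact IsIntegral.mul (htInt.pow _) (htx i j)
    · exact isIntegral_zero
  have hDF : M = Matrix.diagonal d * (1 + F) := by
    ext i j
    rw [Matrix.diagonal_mul, Matrix.add_apply, hMapp, hFapp]
    rcases lt_trichotomy i j with hij | hij | hij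
    · rw [if_pos hij, Matrix.one_apply_ne (ne_of_lt hij)]
      have hji : (i:ℕ) ≤ (j:ℕ) := le_of_lt hij
      rw [pow_sub₀ t ht0 hji]
      have ht' : (t : K) ^ (i:ℕ) ≠ 0 := pow_ne_zero _ ht0
      have ht'' : (t : K) ^ (j:ℕ) ≠ 0 := pow_ne_zero _ ht0
      have hd' : d i ≠ 0 := hd_ne i
      linear_combination (-(t ^ (i:ℕ))⁻¹ * T₀ i j * t ^ (j:ℕ)) * mul_inv_cancel₀ hd'
    · subst hij
      rw [if_neg (lt_irrefl i), Matrix.one_apply_eq]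
      rw [show (t ^ (i:ℕ))⁻¹ * T₀ i i * t ^ (i:ℕ) = T₀ i i * ((t ^ (i:ℕ))⁻¹ * t ^ (i:ℕ)) by ring,
        inv_mul_cancel₀ (pow_ne_zero _ ht0), mul_one, hdg]
      ring
    · rw [if_neg (not_lt_of_gt hij), Matrix.one_apply_ne (ne_of_gt hij), htr i j hij]
      ring
  -- geometric series inverse
  set G : Matrix (Fin n) (Fin n) K := -F with hG
  have hG0 : ∀ i j : Fin n, ¬ i < j → G i j = 0 := by
    intro i j h
    rw [hG, Matrix.neg_apply, hFapp, if_neg h, neg_zero]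
  have hGpow : ∀ k : ℕ, ∀ i j : Fin n, (j : ℕ) < (i : ℕ) + k → (G ^ k) i j = 0 := by
    intro k
    induction k with
    | zero =>
      intro i j h
      rw [pow_zero]
      exact Matrix.one_apply_ne (fun hc => by subst hc; omega)
    | succ k IHk =>
      intro i j h
      rw [pow_succ, Matrix.mul_apply]
      apply Finset.sum_eq_zero
      intro x _
      by_cases hx : x < j
      · have : (x : ℕ) < (j : ℕ) := hx
        rw [IHk i x (by omega), zero_mul]
      · rw [hG0 x j hx, mul_zero]
  have hGn : G ^ n = 0 := by
    ext i j
    rw [hGpow n i j (by omega), Matrix.zero_apply]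
  set Q : Matrix (Fin n) (Fin n) K := ∑ k ∈ Finset.range n, G ^ k with hQ
  have honeF : (1 : Matrix (Fin n) (Fin n) K) + F = -(G - 1) := by
    rw [hG]; abel
  have hFQ : (1 + F) * Q = 1 := by
    rw [honeF, hQ, neg_mul, mul_geom_sum, hGn, zero_sub, neg_neg]
  have hQF : Q * (1 + F) = 1 := by
    rw [honeF, hQ, mul_neg, geom_sum_mul, hGn, zero_sub, neg_neg]
  have hMQ : M * Q = Matrix.diagonal d := by
    rw [hDF, mul_assoc, hFQ, mul_one]
  -- Q entries are integral
  have hGint : ∀ i j, IsIntegral ℤ_[p] (G i j) := by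
    intro i j
    rw [hG, Matrix.neg_apply]
    exact (hFint i j).neg
  have hGpowint : ∀ k : ℕ, ∀ i j, IsIntegral ℤ_[p] ((G ^ k) i j) := by
    intro k
    induction k with
    | zero =>
      intro i j
      rw [pow_zero]
      by_cases h : i = j
      · subst h; rw [Matrix.one_apply_eq]; exact isIntegral_one
      · rw [Matrix.one_apply_ne h]; exact isIntegral_zero
    | succ k IHk =>
      intro i j
      rw [pow_succ, Matrix.mul_apply]
      have hmem : ∀ x ∈ Finset.univ, ((G ^ k) i x * G x j) ∈ integralClosure ℤ_[p] K :=
        fun x _ => mul_mem ((mem_integralClosure_iff _ _).mpr (IHk i x))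
          ((mem_integralClosure_iff _ _).mpr (hGint x j))
      exact (mem_integralClosure_iff _ _).mp (Subalgebra.sum_mem _ hmem)
  have hQint : ∀ i j, IsIntegral ℤ_[p] (Q i j) := by
    intro i j
    rw [hQ, Matrix.sum_apply]
    exact (mem_integralClosure_iff _ _).mp
      (Subalgebra.sum_mem _ (fun k _ => (mem_integralClosure_iff _ _).mpr (hGpowint k i j)))
  -- determinant of Q
  have h1Ftri : (1 + F : Matrix (Fin n) (Fin n) K).BlockTriangular id := by
    intro i j hij
    have hij' : j < i := hij
    show (1 + F) i j = 0
    rw [Matrix.add_apply, Matrix.one_apply_ne (ne_of_gt hij'), hFapp,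
      if_neg (not_lt_of_gt hij'), add_zero]
  have h1Fdet : (1 + F : Matrix (Fin n) (Fin n) K).det = 1 := by
    rw [Matrix.det_of_upperTriangular h1Ftri]
    refine Finset.prod_eq_one (fun i _ => ?_)
    rw [Matrix.add_apply, Matrix.one_apply_eq, hFapp, if_neg (lt_irrefl i), add_zero]
  have hQdet : Q.det = 1 := by
    have := congrArg Matrix.det hFQ
    rw [Matrix.det_mul, h1Fdet, one_mul, Matrix.det_one] at this
    exact this
  -- assemble
  refine ⟨K, inferInstance, inferInstance, inferInstance, U, hUdet, hcard,
    1, Q, d, ?_, ?_, ?_, ?_, ?_, ?_, ?_, ?_, ?_, ?_⟩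
  · intro i j
    by_cases h : i = j
    · subst h; rw [Matrix.one_apply_eq]; exact myValNonneg p isIntegral_one
    · rw [Matrix.one_apply_ne h]; exact myValNonneg p isIntegral_zero
  · rw [Matrix.det_one]; exact one_ne_zero
  · rw [Matrix.det_one]; exact myValOne p
  · intro i j
    exact myValNonneg p (hQint i j)
  · rw [hQdet]; exact one_ne_zero
  · rw [hQdet]; exact myValOne p
  · intro i
    exact myValNonneg p (hd_int i)
  · exact hd_sorted
  · rw [one_mul, hUinv]
    show R * Amap * U * Q = Matrix.diagonal d
    rw [← hM, hMQ]
  · show Multiset.map w cp.roots = Multiset.map (fun i => w (d i)) Finset.univ.val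
    rw [← hd_multiset, Multiset.map_map]
    rfl
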